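/- Let T be a finite tree (a connected acyclic simple graph) on at least 2 vertices and let s be a real number. Then 0 is an eigenvalue of the deformed Laplacian M_T(s) (equivalently, det(M_T(s)) = 0) if and only if s = 1 or s = -1. -/

import Mathlib

open scoped Classical
open Matrix Polynomial

/-- The deformed Laplacian matrix `M_G(s) = I - s·A(G) + s²·(D(G) - I)` of a finite
simple graph `G`. -/
noncomputable def deformedLap {V : Type*} [Fintype V] (G : SimpleGraph V) (s : ℝ) :
    Matrix V V ℝ :=
  1 - s • G.adjMatrix ℝ + s ^ 2 • (Matrix.diagonal (fun v => (G.degree v : ℝ)) - 1)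

/-- The largest (real) eigenvalue of a matrix: the supremum of its real spectrum.
For a real symmetric matrix this is the maximal eigenvalue (the paper's `ρ`). -/
noncomputable def lamMax {n : Type*} [Fintype n] (M : Matrix n n ℝ) : ℝ :=
  sSup (spectrum ℝ M)

/-- For a tree `T` on at least two vertices, `0` is an eigenvalue of `M_T(s)`
if and only if `s = 1` or `s = -1`. -/
theorem stmt_6 {V : Type*} [Fintype V] (T : SimpleGraph V) (hT : T.IsTree)
    (hn : 2 ≤ Fintype.card V) (s : ℝ) :
    0 ∈ spectrum ℝ (deformedLap T s) ↔ s = 1 ∨ s = -1 := by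
  classical
  have hne : Nonempty V := Fintype.card_pos_iff.mp (by omega)
  obtain ⟨r⟩ := hne
  -- spectrum membership reduces to existence of a kernel vector
  have hspec : 0 ∈ spectrum ℝ (deformedLap T s) ↔
      ∃ x : V → ℝ, x ≠ 0 ∧ (deformedLap T s).mulVec x = 0 := by
    rw [spectrum.zero_mem_iff, Matrix.isUnit_iff_isUnit_det, isUnit_iff_ne_zero, not_ne_iff,
      ← Matrix.exists_mulVec_eq_zero_iff]
  -- componentwise formula for the deformed Laplacian
  have hcomp : ∀ (x : V → ℝ) (v : V), (deformedLap T s).mulVec x v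
      = x v - s * (∑ u ∈ T.neighborFinset v, x u) + s ^ 2 * ((T.degree v : ℝ) - 1) * x v := by
    intro x v
    simp only [deformedLap, Matrix.add_mulVec, Matrix.sub_mulVec, Matrix.smul_mulVec,
      Matrix.one_mulVec, SimpleGraph.adjMatrix_mulVec_apply, Pi.add_apply, Pi.sub_apply,
      Pi.smul_apply, smul_eq_mul, Matrix.mulVec_diagonal]
    ring
  -- the chosen unique path to the root r
  set P : ∀ v : V, T.Walk v r := fun v => (hT.existsUnique_path v r).choose with hPdef
  have hP : ∀ v, (P v).IsPath := fun v => (hT.existsUnique_path v r).choose_spec.1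
  have hPu : ∀ {v : V} (q : T.Walk v r), q.IsPath → q = P v :=
    fun {v} q hq => (hT.existsUnique_path v r).choose_spec.2 q hq
  have hPr : P r = SimpleGraph.Walk.nil :=
    (hPu SimpleGraph.Walk.nil SimpleGraph.Walk.IsPath.nil).symm
  -- edge classification: every edge is a parent-child edge for the paths to r
  have key : ∀ ⦃u v : V⦄ (h : T.Adj u v),
      P u = SimpleGraph.Walk.cons h (P v) ∨ P v = SimpleGraph.Walk.cons h.symm (P u) := by
    intro u v h
    by_cases hu : u ∈ (P v).support
    · right
      have hedge : (SimpleGraph.Walk.cons h.symm SimpleGraph.Walk.nil : T.Walk v u).IsPath := by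
        simp [SimpleGraph.Walk.cons_isPath_iff, h.ne']
      obtain ⟨q, hq, huq⟩ := hT.existsUnique_path v u
      have h1 : (P v).takeUntil u hu = SimpleGraph.Walk.cons h.symm SimpleGraph.Walk.nil := by
        rw [huq _ ((hP v).takeUntil hu), huq _ hedge]
      have h2 := SimpleGraph.Walk.take_spec (P v) hu
      have hdrop : (P v).dropUntil u hu = P u := hPu _ ((hP v).dropUntil hu)
      rw [h1, hdrop] at h2
      simpa using h2.symm
    · left
      refine (hPu (SimpleGraph.Walk.cons h (P v)) ?_).symm
      rw [SimpleGraph.Walk.cons_isPath_iff]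
      exact ⟨hP v, hu⟩
  -- lengths of adjacent vertices differ by one
  have hd : ∀ ⦃u v : V⦄, T.Adj u v →
      (P u).length = (P v).length + 1 ∨ (P v).length = (P u).length + 1 := by
    intro u v h
    rcases key h with hk | hk
    · left; rw [hk, SimpleGraph.Walk.length_cons]
    · right; rw [hk, SimpleGraph.Walk.length_cons]
  rw [hspec]
  constructor
  · rintro ⟨x, hx0, hxker⟩
    by_contra hs
    push_neg at hs
    obtain ⟨hs1, hs2⟩ := hs
    have heq : ∀ v, x v - s * (∑ u ∈ T.neighborFinset v, x u)
        + s ^ 2 * ((T.degree v : ℝ) - 1) * x v = 0 := by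
      intro v
      rw [← hcomp x v, hxker]
      rfl
    -- main induction: each vertex equals s times its parent
    have claimA : ∀ n : ℕ, ∀ v u (h : T.Adj v u), P v = SimpleGraph.Walk.cons h (P u) →
        Fintype.card V - (P v).length ≤ n → x v = s * x u := by
      intro n
      induction n with
      | zero =>
        intro v u h hPv hle
        exfalso
        have := (hP v).length_lt
        omega
      | succ n ih =>
        intro v u h hPv hle
        have heqv := heq v
        have hmem : u ∈ T.neighborFinset v := (SimpleGraph.mem_neighborFinset _ _ _).mpr h
        rw [← Finset.add_sum_erase _ _ hmem] at heqv
        have hchild : ∀ w ∈ (T.neighborFinset v).erase u, x w = s * x v := by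
          intro w hw
          obtain ⟨hwne, hwmem⟩ := Finset.mem_erase.mp hw
          have hadj : T.Adj v w := (SimpleGraph.mem_neighborFinset _ _ _).mp hwmem
          rcases key hadj.symm with hk | hk
          · apply ih w v hadj.symm hk
            have hlen : (P w).length = (P v).length + 1 := by
              rw [hk, SimpleGraph.Walk.length_cons]
            omega
          · exfalso
            apply hwne
            have h2 := hPv.symm.trans hk
            have h3 := congrArg (fun q : T.Walk v r => q.getVert 1) h2
            simpa [SimpleGraph.Walk.getVert_cons_succ] using h3.symm
        rw [Finset.sum_congr rfl hchild, Finset.sum_const,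
          Finset.card_erase_of_mem hmem] at heqv
        have hdeg1 : 1 ≤ T.degree v := by
          rw [← SimpleGraph.card_neighborFinset_eq_degree]
          exact Finset.card_pos.mpr ⟨u, hmem⟩
        have hcast : ((T.degree v - 1 : ℕ) : ℝ) = (T.degree v : ℝ) - 1 := by
          push_cast [hdeg1]; ring
        rw [SimpleGraph.card_neighborFinset_eq_degree, nsmul_eq_mul, hcast] at heqv
        linear_combination heqv
    -- every neighbor of the root is a child of the root
    have hroot : ∀ u ∈ T.neighborFinset r, x u = s * x r := by
      intro u hu
      have hadj : T.Adj r u := (SimpleGraph.mem_neighborFinset _ _ _).mp hu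
      rcases key hadj with hk | hk
      · exfalso
        have := congrArg SimpleGraph.Walk.length hk
        rw [hPr, SimpleGraph.Walk.length_cons, SimpleGraph.Walk.length_nil] at this
        omega
      · exact claimA (Fintype.card V) u r hadj.symm hk (Nat.sub_le _ _)
    -- the equation at the root forces (1 - s²) x r = 0
    have hxr : x r = 0 := by
      have heqr := heq r
      rw [Finset.sum_congr rfl hroot, Finset.sum_const,
        SimpleGraph.card_neighborFinset_eq_degree, nsmul_eq_mul] at heqr
      have h1s : (1 - s) * (1 + s) ≠ 0 := by
        intro hc
        rcases mul_eq_zero.mp hc with hc | hc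
        · exact hs1 (by linarith)
        · exact hs2 (by linarith)
      have : (1 - s ^ 2) * x r = 0 := by linear_combination heqr
      have h2 : (1 - s ^ 2) ≠ 0 := by
        intro hc; apply h1s; linear_combination hc
      exact (mul_eq_zero.mp this).resolve_left h2
    -- propagate zero from the root
    have hzero : ∀ n : ℕ, ∀ v, (P v).length ≤ n → x v = 0 := by
      intro n
      induction n with
      | zero =>
        intro v hv
        have hvr : v = r := SimpleGraph.Walk.eq_of_length_eq_zero (Nat.le_zero.mp hv)
        rw [hvr]; exact hxr
      | succ n ih =>
        intro v hv
        by_cases hvr : v = r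
        · rw [hvr]; exact hxr
        · obtain ⟨u, h, q, hq⟩ := SimpleGraph.Walk.exists_eq_cons_of_ne hvr (P v)
          have hqpath : q.IsPath := by
            have := hP v
            rw [hq, SimpleGraph.Walk.cons_isPath_iff] at this
            exact this.1
          have hqP : q = P u := hPu q hqpath
          rw [hqP] at hq
          have hxv : x v = s * x u := claimA (Fintype.card V) v u h hq (Nat.sub_le _ _)
          have hlen : (P u).length ≤ n := by
            have := congrArg SimpleGraph.Walk.length hq
            rw [SimpleGraph.Walk.length_cons] at this
            omega
          rw [hxv, ih u hlen, mul_zero]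
    apply hx0
    funext v
    exact hzero (P v).length v le_rfl
  · rintro (rfl | rfl)
    · -- s = 1 : the all-ones vector is in the kernel
      refine ⟨fun _ => 1, ?_, ?_⟩
      · intro hc
        have := congrFun hc r
        simp at this
      · funext v
        rw [hcomp]
        have : ∑ u ∈ T.neighborFinset v, (1 : ℝ) = (T.degree v : ℝ) := by
          rw [Finset.sum_const, SimpleGraph.card_neighborFinset_eq_degree, nsmul_eq_mul, mul_one]
        rw [this]
        simp only [Pi.zero_apply]
        ring
    · -- s = -1 : the alternating vector is in the kernel
      refine ⟨fun v => (-1 : ℝ) ^ (P v).length, ?_, ?_⟩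
      · intro hc
        have := congrFun hc r
        rw [hPr] at this
        simp at this
      · funext v
        rw [hcomp]
        have hnb : ∀ u ∈ T.neighborFinset v, ((-1 : ℝ) ^ (P u).length)
            = -(-1 : ℝ) ^ (P v).length := by
          intro u hu
          have hadj : T.Adj v u := (SimpleGraph.mem_neighborFinset _ _ _).mp hu
          rcases hd hadj.symm with hk | hk
          · rw [hk, pow_succ]; ring
          · rw [hk, pow_succ]; ring
        rw [Finset.sum_congr rfl hnb, Finset.sum_const,
          SimpleGraph.card_neighborFinset_eq_degree, nsmul_eq_mul]
        simp only [Pi.zero_apply]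
        ring
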